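/- Under the energy conservation setting with V_X(λ) = (m²/2)λ + W_X(λ), W_X(λ) ≥ 0 for λ ≥ 0, m > 0, and grid ratio τ/ε ≤ 1/√n, any ℓ² solution ψ of the Strauss–Vazquez scheme satisfies εⁿ ∑_X |ψ_X^t|² ≤ 4E⁰/m² for all t ∈ ℤ, where E⁰ is the conserved discrete energy at t = 0. -/

import Mathlib

set_option maxHeartbeats 1000000

open scoped InnerProductSpace

private lemma sv_keyA {F : Type*} [NormedAddCommGroup F] [InnerProductSpace ℝ F] (a b p q : F) :
    ‖a - p‖^2 + ‖a - q‖^2 - 2*‖a - b‖^2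
      = ‖p‖^2 + ‖q‖^2 - 2*‖b‖^2 - 2 * ⟪a, p - (2:ℝ)•b + q⟫_ℝ := by
  simp [norm_sub_sq_real, inner_add_right, inner_sub_right, real_inner_smul_right]
  ring

private lemma sv_keyB {F : Type*} [NormedAddCommGroup F] [InnerProductSpace ℝ F] (a b c : F) :
    ⟪a - c, a - (2:ℝ)•b + c⟫_ℝ = ‖a - b‖^2 - ‖b - c‖^2 := by
  simp [norm_sub_sq_real, inner_add_right, inner_sub_right, inner_sub_left, inner_add_left,
    real_inner_smul_right, real_inner_self_eq_norm_sq, real_inner_comm a b,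
    real_inner_comm c a, real_inner_comm c b]
  ring

private lemma sv_keyC {F : Type*} [NormedAddCommGroup F] [InnerProductSpace ℝ F] (a c : F) :
    ⟪a - c, a + c⟫_ℝ = ‖a‖^2 - ‖c‖^2 := by
  simp [inner_add_right, inner_sub_left, real_inner_self_eq_norm_sq, real_inner_comm c a]

private lemma sv_norm_sub_sq_le {F : Type*} [NormedAddCommGroup F] (u v : F) :
    ‖u - v‖^2 ≤ 2*(‖u‖^2 + ‖v‖^2) := by
  have := norm_sub_le u v
  nlinarith [norm_nonneg u, norm_nonneg v, sq_nonneg (‖u‖ - ‖v‖), norm_nonneg (u - v)]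

private lemma sv_inner_le {F : Type*} [NormedAddCommGroup F] [InnerProductSpace ℝ F] (u v : F) :
    |⟪u, v⟫_ℝ| ≤ (‖u‖^2 + ‖v‖^2)/2 := by
  have := abs_real_inner_le_norm u v
  nlinarith [sq_nonneg (‖u‖ - ‖v‖)]

noncomputable def svLap (n N : ℕ) (ψ : ℤ → (Fin n → ℤ) → EuclideanSpace ℂ (Fin N))
    (t : ℤ) (X : Fin n → ℤ) : EuclideanSpace ℂ (Fin N) :=
  ∑ j, (ψ t (X + Pi.single j 1) - (2:ℝ) • ψ t X + ψ t (X - Pi.single j 1))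

theorem stmt13 (n N : ℕ) (hn : 1 ≤ n) (hN : 1 ≤ N)
    (τ ε : ℝ) (hτ : 0 < τ) (hε : 0 < ε)
    (hratio : τ / ε ≤ 1 / Real.sqrt n)
    (m : ℝ) (hm : 0 < m)
    (W : (Fin n → ℤ) → ℝ → ℝ) (hW : ∀ X, ContDiff ℝ 1 (W X))
    (hWpos : ∀ X (l : ℝ), 0 ≤ l → 0 ≤ W X l)
    (V : (Fin n → ℤ) → ℝ → ℝ)
    (hV : ∀ X (l : ℝ), V X l = m ^ 2 / 2 * l + W X l)
    (B : (Fin n → ℤ) → ℝ → ℝ → ℝ)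
    (hB : ∀ X (l μ : ℝ), B X l μ =
      if l = μ then deriv (V X) l else (V X l - V X μ) / (l - μ))
    (ψ : ℤ → (Fin n → ℤ) → EuclideanSpace ℂ (Fin N))
    (hl2 : ∀ t : ℤ, Summable fun X : Fin n → ℤ => ‖ψ t X‖ ^ 2)
    (hVsum : ∀ t : ℤ, Summable fun X : Fin n → ℤ => V X (‖ψ t X‖ ^ 2))
    (hscheme : ∀ (t : ℤ) (X : Fin n → ℤ),
      (τ ^ 2)⁻¹ • (ψ (t + 1) X - (2 : ℝ) • ψ t X + ψ (t - 1) X)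
        = (ε ^ 2)⁻¹ • (∑ j : Fin n,
            (ψ t (X + Pi.single j 1) - (2 : ℝ) • ψ t X + ψ t (X - Pi.single j 1)))
          - B X (‖ψ (t + 1) X‖ ^ 2) (‖ψ (t - 1) X‖ ^ 2)
              • (ψ (t + 1) X + ψ (t - 1) X))
    (E : ℤ → ℝ)
    (hE : ∀ t : ℤ, E t = ε ^ n * ∑' X : Fin n → ℤ,
      ((1 / τ ^ 2 - n / ε ^ 2) * ‖ψ (t + 1) X - ψ t X‖ ^ 2 / 2
        + (∑ j : Fin n, (‖ψ (t + 1) X - ψ t (X + Pi.single j 1)‖ ^ 2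
            + ‖ψ (t + 1) X - ψ t (X - Pi.single j 1)‖ ^ 2)) / (4 * ε ^ 2)
        + (V X (‖ψ (t + 1) X‖ ^ 2) + V X (‖ψ t X‖ ^ 2)) / 2)) :
    ∀ t : ℤ, ε ^ n * ∑' X : Fin n → ℤ, ‖ψ t X‖ ^ 2 ≤ 4 * E 0 / m ^ 2 := by
  have hε2 : (0:ℝ) < ε^2 := by positivity
  have hτ2 : (0:ℝ) < τ^2 := by positivity
  have hn' : (0:ℝ) < n := by exact_mod_cast hn
  -- grid ratio gives nonnegativity of the coefficient
  have hc : (0:ℝ) ≤ 1/τ^2 - (n:ℝ)/ε^2 := by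
    have hs : (0:ℝ) < Real.sqrt n := Real.sqrt_pos.2 hn'
    rw [div_le_div_iff₀ hε hs, one_mul] at hratio
    have h2 : τ * Real.sqrt n * (τ * Real.sqrt n) ≤ ε * ε :=
      mul_le_mul hratio hratio (by positivity) (le_of_lt (by positivity))
    have h3 : Real.sqrt n * Real.sqrt n = (n:ℝ) := Real.mul_self_sqrt hn'.le
    rw [sub_nonneg, div_le_div_iff₀ hε2 hτ2]
    nlinarith
  -- shift machinery
  have hshift : ∀ (f : (Fin n → ℤ) → ℝ) (v : Fin n → ℤ), ∑' X, f (X + v) = ∑' X, f X := by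
    intro f v; simpa using (Equiv.addRight v).tsum_eq f
  have hsub : ∀ (t : ℤ) (v : Fin n → ℤ), Summable (fun X => ‖ψ t (X + v)‖^2) := by
    intro t v; exact (Equiv.addRight v).summable_iff.2 (hl2 t)
  -- summability of inner products
  have hips : ∀ (s t : ℤ) (v : Fin n → ℤ),
      Summable (fun X => (⟪ψ s X, ψ t (X + v)⟫_ℝ : ℝ)) := by
    intro s t v
    refine Summable.of_abs (Summable.of_nonneg_of_le (fun X => abs_nonneg _)
      (fun X => sv_inner_le _ _) ?_)
    exact ((hl2 s).add (hsub t v)).div_const 2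
  have hip0 : ∀ (s t : ℤ), Summable (fun X => (⟪ψ s X, ψ t X⟫_ℝ : ℝ)) := by
    intro s t; simpa using hips s t 0
  -- symmetry of shifted inner sums
  have hJsym : ∀ (s t : ℤ) (v : Fin n → ℤ),
      (∑' X, (⟪ψ s X, ψ t (X + v)⟫_ℝ : ℝ)) = ∑' X, (⟪ψ t X, ψ s (X + (-v))⟫_ℝ : ℝ) := by
    intro s t v
    rw [← (Equiv.subRight v).tsum_eq (fun X => (⟪ψ s X, ψ t (X + v)⟫_ℝ : ℝ))]
    refine tsum_congr fun X => ?_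
    have h1 : (Equiv.subRight v) X = X - v := rfl
    rw [h1, sub_add_cancel _ v, ← sub_eq_add_neg]
    exact real_inner_comm _ _
  -- Laplacian inner product expansion
  have hLapEq : ∀ (s t : ℤ),
      (fun X => (⟪ψ s X, svLap n N ψ t X⟫_ℝ : ℝ))
        = fun X => ∑ j : Fin n, ((⟪ψ s X, ψ t (X + Pi.single j 1)⟫_ℝ : ℝ)
            + ⟪ψ s X, ψ t (X - Pi.single j 1)⟫_ℝ - 2 * ⟪ψ s X, ψ t X⟫_ℝ) := by
    intro s t
    funext X
    rw [svLap, inner_sum]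
    refine Finset.sum_congr rfl fun j _ => ?_
    rw [inner_add_right, inner_sub_right, real_inner_smul_right]
    ring
  have hsubs : ∀ (s t : ℤ) (j : Fin n),
      Summable (fun X => (⟪ψ s X, ψ t (X - Pi.single j 1)⟫_ℝ : ℝ)) := by
    intro s t j
    have := hips s t (-(Pi.single j 1))
    simpa [sub_eq_add_neg] using this
  have hLapSumm : ∀ (s t : ℤ), Summable (fun X => (⟪ψ s X, svLap n N ψ t X⟫_ℝ : ℝ)) := by
    intro s t
    rw [hLapEq s t]
    refine summable_sum fun j _ => ?_
    exact ((hips s t (Pi.single j 1)).add (hsubs s t j)).sub ((hip0 s t).mul_left 2)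
  -- value of Laplacian inner sums
  have hLapval : ∀ (s t : ℤ),
      (∑' X, (⟪ψ s X, svLap n N ψ t X⟫_ℝ : ℝ))
        = ∑ j : Fin n, ((∑' X, (⟪ψ s X, ψ t (X + Pi.single j 1)⟫_ℝ : ℝ))
            + (∑' X, (⟪ψ s X, ψ t (X + -(Pi.single j 1))⟫_ℝ : ℝ))
            - 2 * ∑' X, (⟪ψ s X, ψ t X⟫_ℝ : ℝ)) := by
    intro s t
    rw [hLapEq s t]
    rw [Summable.tsum_finsetSum (fun j _ =>
      ((hips s t (Pi.single j 1)).add (hsubs s t j)).sub ((hip0 s t).mul_left 2))]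
    refine Finset.sum_congr rfl fun j _ => ?_
    have hx : (∑' X, (⟪ψ s X, ψ t (X - Pi.single j 1)⟫_ℝ : ℝ))
        = ∑' X, (⟪ψ s X, ψ t (X + -Pi.single j 1)⟫_ℝ : ℝ) :=
      tsum_congr fun X => by rw [sub_eq_add_neg]
    rw [Summable.tsum_sub ((hips s t (Pi.single j 1)).add (hsubs s t j)) ((hip0 s t).mul_left 2),
      Summable.tsum_add (hips s t (Pi.single j 1)) (hsubs s t j), tsum_mul_left, hx]
  have hLapsym : ∀ (s t : ℤ),
      (∑' X, (⟪ψ s X, svLap n N ψ t X⟫_ℝ : ℝ)) = ∑' X, (⟪ψ t X, svLap n N ψ s X⟫_ℝ : ℝ) := by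
    intro s t
    rw [hLapval s t, hLapval t s]
    refine Finset.sum_congr rfl fun j _ => ?_
    have hcomm : (∑' X, (⟪ψ s X, ψ t X⟫_ℝ : ℝ)) = ∑' X, (⟪ψ t X, ψ s X⟫_ℝ : ℝ) :=
      tsum_congr fun X => real_inner_comm _ _
    rw [hJsym s t (Pi.single j 1), hJsym s t (-(Pi.single j 1)), hcomm]
    simp only [neg_neg]
    ring
  -- summability of basic pieces
  have hdsum : ∀ (s t : ℤ), Summable (fun X => ‖ψ s X - ψ t X‖^2) := by
    intro s t
    refine Summable.of_nonneg_of_le (fun X => sq_nonneg _) (fun X => sv_norm_sub_sq_le _ _)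
      ?_
    exact ((hl2 s).add (hl2 t)).mul_left 2
  have hsubn : ∀ (t : ℤ) (j : Fin n), Summable (fun X : Fin n → ℤ => ‖ψ t (X - Pi.single j 1)‖^2) := by
    intro t j
    have := hsub t (-(Pi.single j 1))
    simpa [sub_eq_add_neg] using this
  have hHs : ∀ (t : ℤ) (j : Fin n), Summable (fun X =>
      ‖ψ t (X + Pi.single j 1)‖^2 + ‖ψ t (X - Pi.single j 1)‖^2 - 2*‖ψ t X‖^2) := by
    intro t j
    exact ((hsub t (Pi.single j 1)).add (hsubn t j)).sub ((hl2 t).mul_left 2)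
  -- the H-sum vanishes
  have hHzero : ∀ (t : ℤ), (∑' X, ∑ j : Fin n, (‖ψ t (X + Pi.single j 1)‖^2
      + ‖ψ t (X - Pi.single j 1)‖^2 - 2*‖ψ t X‖^2)) = 0 := by
    intro t
    rw [Summable.tsum_finsetSum (fun j _ => hHs t j)]
    refine Finset.sum_eq_zero fun j _ => ?_
    rw [Summable.tsum_sub ((hsub t (Pi.single j 1)).add (hsubn t j)) ((hl2 t).mul_left 2),
      Summable.tsum_add (hsub t (Pi.single j 1)) (hsubn t j), tsum_mul_left]
    have h1 : (∑' X, ‖ψ t (X + Pi.single j 1)‖^2) = ∑' X, ‖ψ t X‖^2 :=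
      hshift (fun X => ‖ψ t X‖^2) (Pi.single j 1)
    have h2 : (∑' X : Fin n → ℤ, ‖ψ t (X - Pi.single j 1)‖^2) = ∑' X, ‖ψ t X‖^2 := by
      rw [tsum_congr (fun X => by rw [sub_eq_add_neg] :
        ∀ X : Fin n → ℤ, ‖ψ t (X - Pi.single j 1)‖^2 = ‖ψ t (X + -(Pi.single j 1))‖^2)]
      exact hshift (fun X => ‖ψ t X‖^2) (-(Pi.single j 1))
    rw [h1, h2]; ring
  -- pointwise rewriting of the energy summand
  have hpt : ∀ (t : ℤ) (X : Fin n → ℤ),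
      (1 / τ ^ 2 - n / ε ^ 2) * ‖ψ (t + 1) X - ψ t X‖ ^ 2 / 2
        + (∑ j : Fin n, (‖ψ (t + 1) X - ψ t (X + Pi.single j 1)‖ ^ 2
            + ‖ψ (t + 1) X - ψ t (X - Pi.single j 1)‖ ^ 2)) / (4 * ε ^ 2)
        + (V X (‖ψ (t + 1) X‖ ^ 2) + V X (‖ψ t X‖ ^ 2)) / 2
      = ‖ψ (t + 1) X - ψ t X‖^2 / (2*τ^2)
        + (∑ j : Fin n, (‖ψ t (X + Pi.single j 1)‖^2 + ‖ψ t (X - Pi.single j 1)‖^2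
            - 2*‖ψ t X‖^2)) / (4*ε^2)
        + (-(⟪ψ (t + 1) X, svLap n N ψ t X⟫_ℝ / (2*ε^2)))
        + (V X (‖ψ (t + 1) X‖ ^ 2) + V X (‖ψ t X‖ ^ 2)) / 2 := by
    intro t X
    have hsum1 : (∑ j : Fin n, (‖ψ (t + 1) X - ψ t (X + Pi.single j 1)‖ ^ 2
          + ‖ψ (t + 1) X - ψ t (X - Pi.single j 1)‖ ^ 2))
        = (∑ j : Fin n, (‖ψ t (X + Pi.single j 1)‖^2 + ‖ψ t (X - Pi.single j 1)‖^2
            - 2*‖ψ t X‖^2))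
          - 2 * ⟪ψ (t + 1) X, svLap n N ψ t X⟫_ℝ + (n:ℝ) * (2*‖ψ (t + 1) X - ψ t X‖^2) := by
      have hterm : ∀ j : Fin n, ‖ψ (t + 1) X - ψ t (X + Pi.single j 1)‖ ^ 2
          + ‖ψ (t + 1) X - ψ t (X - Pi.single j 1)‖ ^ 2
        = ((‖ψ t (X + Pi.single j 1)‖^2 + ‖ψ t (X - Pi.single j 1)‖^2 - 2*‖ψ t X‖^2)
            - 2 * ⟪ψ (t + 1) X, ψ t (X + Pi.single j 1) - (2:ℝ)•ψ t X
                + ψ t (X - Pi.single j 1)⟫_ℝ)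
          + 2*‖ψ (t + 1) X - ψ t X‖^2 := by
        intro j
        have := sv_keyA (ψ (t+1) X) (ψ t X) (ψ t (X + Pi.single j 1)) (ψ t (X - Pi.single j 1))
        linarith
      rw [Finset.sum_congr rfl fun j _ => hterm j, Finset.sum_add_distrib,
        Finset.sum_sub_distrib, ← Finset.mul_sum, Finset.sum_const, Finset.card_univ,
        Fintype.card_fin, nsmul_eq_mul]
      rw [svLap, inner_sum]
    rw [hsum1]
    field_simp
    ring
  -- summability of the full energy summand
  have hf2s : ∀ t : ℤ, Summable (fun X => (∑ j : Fin n, (‖ψ t (X + Pi.single j 1)‖^2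
      + ‖ψ t (X - Pi.single j 1)‖^2 - 2*‖ψ t X‖^2)) / (4*ε^2)) := by
    intro t
    exact (summable_sum fun j _ => hHs t j).div_const _
  have hVbar : ∀ t : ℤ, Summable (fun X =>
      (V X (‖ψ (t + 1) X‖ ^ 2) + V X (‖ψ t X‖ ^ 2)) / 2) := by
    intro t
    exact ((hVsum (t+1)).add (hVsum t)).div_const 2
  have hFsum : ∀ t : ℤ, Summable (fun X : Fin n → ℤ =>
      (1 / τ ^ 2 - n / ε ^ 2) * ‖ψ (t + 1) X - ψ t X‖ ^ 2 / 2
        + (∑ j : Fin n, (‖ψ (t + 1) X - ψ t (X + Pi.single j 1)‖ ^ 2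
            + ‖ψ (t + 1) X - ψ t (X - Pi.single j 1)‖ ^ 2)) / (4 * ε ^ 2)
        + (V X (‖ψ (t + 1) X‖ ^ 2) + V X (‖ψ t X‖ ^ 2)) / 2) := by
    intro t
    rw [show (fun X : Fin n → ℤ =>
      (1 / τ ^ 2 - n / ε ^ 2) * ‖ψ (t + 1) X - ψ t X‖ ^ 2 / 2
        + (∑ j : Fin n, (‖ψ (t + 1) X - ψ t (X + Pi.single j 1)‖ ^ 2
            + ‖ψ (t + 1) X - ψ t (X - Pi.single j 1)‖ ^ 2)) / (4 * ε ^ 2)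
        + (V X (‖ψ (t + 1) X‖ ^ 2) + V X (‖ψ t X‖ ^ 2)) / 2) = fun X =>
      ‖ψ (t + 1) X - ψ t X‖^2 / (2*τ^2)
        + (∑ j : Fin n, (‖ψ t (X + Pi.single j 1)‖^2 + ‖ψ t (X - Pi.single j 1)‖^2
            - 2*‖ψ t X‖^2)) / (4*ε^2)
        + (-(⟪ψ (t + 1) X, svLap n N ψ t X⟫_ℝ / (2*ε^2)))
        + (V X (‖ψ (t + 1) X‖ ^ 2) + V X (‖ψ t X‖ ^ 2)) / 2 from funext fun X => hpt t X]
    exact ((((hdsum (t+1) t).div_const _).add (hf2s t)).add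
      (((hLapSumm (t+1) t).div_const _).neg)).add (hVbar t)
  -- alternative form of the energy
  have hEalt : ∀ t : ℤ, E t = ε ^ n * ((∑' X, ‖ψ (t + 1) X - ψ t X‖^2) / (2*τ^2)
      - (∑' X, (⟪ψ (t + 1) X, svLap n N ψ t X⟫_ℝ : ℝ)) / (2*ε^2)
      + ((∑' X, V X (‖ψ (t + 1) X‖ ^ 2)) + ∑' X, V X (‖ψ t X‖ ^ 2)) / 2) := by
    intro t
    rw [hE t]
    congr 1
    rw [tsum_congr (hpt t)]
    rw [Summable.tsum_add ((((hdsum (t+1) t).div_const _).add (hf2s t)).add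
        (((hLapSumm (t+1) t).div_const _).neg)) (hVbar t),
      Summable.tsum_add (((hdsum (t+1) t).div_const _).add (hf2s t))
        (((hLapSumm (t+1) t).div_const _).neg),
      Summable.tsum_add ((hdsum (t+1) t).div_const _) (hf2s t)]
    rw [tsum_div_const, tsum_div_const, tsum_neg, tsum_div_const, tsum_div_const,
      Summable.tsum_add (hVsum (t+1)) (hVsum t), hHzero t]
    ring
  -- conservation of energy
  have hcons : ∀ t : ℤ, E t = E (t - 1) := by
    intro t
    have hBV : ∀ X : Fin n → ℤ, B X (‖ψ (t + 1) X‖ ^ 2) (‖ψ (t - 1) X‖ ^ 2)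
        * (‖ψ (t + 1) X‖ ^ 2 - ‖ψ (t - 1) X‖ ^ 2)
        = V X (‖ψ (t + 1) X‖ ^ 2) - V X (‖ψ (t - 1) X‖ ^ 2) := by
      intro X
      rw [hB]
      by_cases h : (‖ψ (t + 1) X‖ ^ 2 : ℝ) = ‖ψ (t - 1) X‖ ^ 2
      · rw [if_pos h, h]; ring
      · rw [if_neg h, div_mul_cancel₀]
        exact sub_ne_zero.2 h
    -- pointwise energy flux identity from the scheme
    have hptc : ∀ X : Fin n → ℤ,
        (⟪ψ (t + 1) X, svLap n N ψ t X⟫_ℝ : ℝ) - ⟪ψ (t - 1) X, svLap n N ψ t X⟫_ℝ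
        = ε^2 * ((τ^2)⁻¹ * (‖ψ (t + 1) X - ψ t X‖^2 - ‖ψ t X - ψ (t - 1) X‖^2)
            + (V X (‖ψ (t + 1) X‖ ^ 2) - V X (‖ψ (t - 1) X‖ ^ 2))) := by
      intro X
      have hs := hscheme t X
      have h1 : (⟪ψ (t + 1) X - ψ (t - 1) X,
          (τ ^ 2)⁻¹ • (ψ (t + 1) X - (2 : ℝ) • ψ t X + ψ (t - 1) X)⟫_ℝ : ℝ)
          = ⟪ψ (t + 1) X - ψ (t - 1) X, (ε ^ 2)⁻¹ • svLap n N ψ t X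
            - B X (‖ψ (t + 1) X‖ ^ 2) (‖ψ (t - 1) X‖ ^ 2)
              • (ψ (t + 1) X + ψ (t - 1) X)⟫_ℝ := by
        rw [svLap]; rw [hs]
      rw [real_inner_smul_right, sv_keyB, inner_sub_right, real_inner_smul_right,
        real_inner_smul_right, sv_keyC, inner_sub_left] at h1
      rw [hBV X] at h1
      set t1 := (⟪ψ (t + 1) X, svLap n N ψ t X⟫_ℝ : ℝ) with ht1
      set t2 := (⟪ψ (t - 1) X, svLap n N ψ t X⟫_ℝ : ℝ) with ht2
      have hτ2' : (τ^2 : ℝ) ≠ 0 := ne_of_gt hτ2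
      have hε2' : (ε^2 : ℝ) ≠ 0 := ne_of_gt hε2
      field_simp at h1 ⊢
      linear_combination -h1
    have hsplit : (∑' X, (⟪ψ (t + 1) X, svLap n N ψ t X⟫_ℝ : ℝ))
        - (∑' X, (⟪ψ (t - 1) X, svLap n N ψ t X⟫_ℝ : ℝ))
        = ε^2 * ((τ^2)⁻¹ * ((∑' X, ‖ψ (t + 1) X - ψ t X‖^2)
            - ∑' X, ‖ψ t X - ψ (t - 1) X‖^2)
          + ((∑' X, V X (‖ψ (t + 1) X‖ ^ 2)) - ∑' X, V X (‖ψ (t - 1) X‖ ^ 2))) := by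
      rw [← Summable.tsum_sub (hLapSumm (t+1) t) (hLapSumm (t-1) t)]
      rw [tsum_congr hptc]
      rw [tsum_mul_left, Summable.tsum_add ((((hdsum (t+1) t).sub (hdsum t (t-1))).mul_left _ : Summable fun X => (τ^2)⁻¹ * (‖ψ (t + 1) X - ψ t X‖^2 - ‖ψ t X - ψ (t - 1) X‖^2)))
        ((hVsum (t+1)).sub (hVsum (t-1))),
        tsum_mul_left, Summable.tsum_sub (hdsum (t+1) t) (hdsum t (t-1)),
        Summable.tsum_sub (hVsum (t+1)) (hVsum (t-1))]
    rw [hEalt t, hEalt (t-1), sub_add_cancel t 1]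
    rw [hLapsym t (t-1)]
    set Dt := ∑' X, ‖ψ (t + 1) X - ψ t X‖^2 with hDt
    set Dm := ∑' X, ‖ψ t X - ψ (t - 1) X‖^2 with hDm
    set Lt := ∑' X, (⟪ψ (t + 1) X, svLap n N ψ t X⟫_ℝ : ℝ) with hLt
    set Lm := ∑' X, (⟪ψ (t - 1) X, svLap n N ψ t X⟫_ℝ : ℝ) with hLm
    set SVp := ∑' X, V X (‖ψ (t + 1) X‖ ^ 2) with hSVp
    set SVt := ∑' X, V X (‖ψ t X‖ ^ 2) with hSVt
    set SVm := ∑' X, V X (‖ψ (t - 1) X‖ ^ 2) with hSVm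
    have hLtm : Lt = Lm + ε^2 * ((τ^2)⁻¹ * (Dt - Dm) + (SVp - SVm)) := by
      rw [← hsplit]; ring
    rw [hLtm]
    field_simp
    ring
  -- energy is constant
  have hE0 : ∀ t : ℤ, E t = E 0 := by
    intro t
    induction t using Int.induction_on with
    | zero => rfl
    | succ k ih =>
        have h := hcons ((k:ℤ) + 1)
        rw [add_sub_cancel_right] at h
        rw [h]; exact ih
    | pred k ih =>
        rw [← hcons (-(k:ℤ))]; exact ih
  -- lower bound on the energy
  intro t
  have hpw : ∀ X : Fin n → ℤ, m^2/4 * ‖ψ t X‖^2 ≤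
      (1 / τ ^ 2 - n / ε ^ 2) * ‖ψ (t + 1) X - ψ t X‖ ^ 2 / 2
        + (∑ j : Fin n, (‖ψ (t + 1) X - ψ t (X + Pi.single j 1)‖ ^ 2
            + ‖ψ (t + 1) X - ψ t (X - Pi.single j 1)‖ ^ 2)) / (4 * ε ^ 2)
        + (V X (‖ψ (t + 1) X‖ ^ 2) + V X (‖ψ t X‖ ^ 2)) / 2 := by
    intro X
    have h1 : (0:ℝ) ≤ (1 / τ ^ 2 - n / ε ^ 2) * ‖ψ (t + 1) X - ψ t X‖ ^ 2 / 2 := by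
      have := sq_nonneg ‖ψ (t + 1) X - ψ t X‖
      positivity
    have h2 : (0:ℝ) ≤ (∑ j : Fin n, (‖ψ (t + 1) X - ψ t (X + Pi.single j 1)‖ ^ 2
        + ‖ψ (t + 1) X - ψ t (X - Pi.single j 1)‖ ^ 2)) / (4 * ε ^ 2) := by
      have : (0:ℝ) ≤ ∑ j : Fin n, (‖ψ (t + 1) X - ψ t (X + Pi.single j 1)‖ ^ 2
          + ‖ψ (t + 1) X - ψ t (X - Pi.single j 1)‖ ^ 2) :=
        Finset.sum_nonneg fun j _ => by positivity
      positivity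
    have h3 : m^2/2 * ‖ψ t X‖^2 ≤ V X (‖ψ t X‖ ^ 2) := by
      rw [hV]
      have := hWpos X (‖ψ t X‖^2) (sq_nonneg _)
      linarith
    have h4 : (0:ℝ) ≤ V X (‖ψ (t + 1) X‖ ^ 2) := by
      rw [hV]
      have := hWpos X (‖ψ (t+1) X‖^2) (sq_nonneg _)
      nlinarith [sq_nonneg ‖ψ (t+1) X‖]
    nlinarith
  have hEt : ε ^ n * (m^2/4 * ∑' X, ‖ψ t X‖^2) ≤ E t := by
    rw [hE t]
    have hle : (∑' X, m^2/4 * ‖ψ t X‖^2) ≤ ∑' X, (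
        (1 / τ ^ 2 - n / ε ^ 2) * ‖ψ (t + 1) X - ψ t X‖ ^ 2 / 2
        + (∑ j : Fin n, (‖ψ (t + 1) X - ψ t (X + Pi.single j 1)‖ ^ 2
            + ‖ψ (t + 1) X - ψ t (X - Pi.single j 1)‖ ^ 2)) / (4 * ε ^ 2)
        + (V X (‖ψ (t + 1) X‖ ^ 2) + V X (‖ψ t X‖ ^ 2)) / 2) :=
      Summable.tsum_le_tsum hpw ((hl2 t).mul_left _) (hFsum t)
    rw [tsum_mul_left] at hle
    have hεn : (0:ℝ) < ε ^ n := by positivity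
    exact mul_le_mul_of_nonneg_left hle hεn.le
  rw [← hE0 t]
  rw [le_div_iff₀ (by positivity : (0:ℝ) < m^2)]
  nlinarith [hEt]
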